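/- Let p be prime and n a positive integer, and let C = <g(x) + u·p(x), u·a(x)> be a cyclic code of length n over R2 = Z_p[u]/(u^2), where all generators come from the standard construction (g(x) generates the image of C under reduction mod u and u·a(x) generates the kernel). Then a(x) divides g(x) in Z_p[x], and a(x) divides p(x)·(x^n - 1)/g(x) in Z_p[x]. -/

import Mathlib

open Polynomial

noncomputable section

/-- `Ru p k` is the ring `R_k = Z_p[u]/(u^k)`. -/
abbrev Ru (p k : ℕ) : Type := Polynomial (ZMod p) ⧸ Ideal.span {(X : Polynomial (ZMod p)) ^ k}

instance (p k : ℕ) : CommRing (Ru p k) := Ideal.Quotient.commRing _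

/-- The element `u` of `Ru p k`. -/
abbrev uR (p k : ℕ) : Ru p k := Ideal.Quotient.mk _ (X : Polynomial (ZMod p))

/-- `Rn p k n` is the ring `R_k[x]/(x^n - 1)`; its ideals are the cyclic codes of length `n`. -/
abbrev Rn (p k n : ℕ) : Type :=
  Polynomial (Ru p k) ⧸ Ideal.span {(X : Polynomial (Ru p k)) ^ n - 1}

/-- The natural ring map `Z_p[x] → R_k[x]/(x^n - 1)`. -/
abbrev liftP (p k n : ℕ) : Polynomial (ZMod p) →+* Rn p k n :=
  (Ideal.Quotient.mk _).comp (mapRingHom (algebraMap (ZMod p) (Ru p k)))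

/-- `u` as an element of `R_k[x]/(x^n - 1)`. -/
abbrev uu (p k n : ℕ) : Rn p k n := Ideal.Quotient.mk _ (C (uR p k))

/-- `x` as an element of `R_k[x]/(x^n - 1)`. -/
abbrev xx (p k n : ℕ) : Rn p k n := Ideal.Quotient.mk _ (X : Polynomial (Ru p k))

/-- `Zn p n` is the ring `Z_p[x]/(x^n - 1)`. -/
abbrev Zn (p n : ℕ) : Type :=
  Polynomial (ZMod p) ⧸ Ideal.span {(X : Polynomial (ZMod p)) ^ n - 1}

/-- The quotient map `Z_p[x] → Z_p[x]/(x^n - 1)`. -/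
abbrev mkZ (p n : ℕ) : Polynomial (ZMod p) →+* Zn p n := Ideal.Quotient.mk _

/-- The natural map `Z_p[x]/(x^n-1) → R_k[x]/(x^n-1)`. -/
def theta (p k n : ℕ) : Zn p n →+* Rn p k n :=
  Ideal.Quotient.lift _ (liftP p k n) (by
    intro f hf
    rw [Ideal.mem_span_singleton] at hf
    obtain ⟨c, rfl⟩ := hf
    have : (mapRingHom (algebraMap (ZMod p) (Ru p k))) (((X : Polynomial (ZMod p)) ^ n - 1) * c)
        ∈ Ideal.span {(X : Polynomial (Ru p k)) ^ n - 1} := by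
      rw [map_mul]
      refine Ideal.mul_mem_right _ _ (Ideal.subset_span ?_)
      simp
    exact Ideal.Quotient.eq_zero_iff_mem.mpr this)

/-- Reduction mod `u` : `R_2 = Z_p[u]/(u^2) → Z_p`. -/
def epsR (p : ℕ) : Ru p 2 →+* ZMod p :=
  Ideal.Quotient.lift _ (evalRingHom 0) (by
    intro f hf
    rw [Ideal.mem_span_singleton] at hf
    obtain ⟨c, rfl⟩ := hf
    simp)

/-- Coefficientwise reduction mod `u` : `R_2[x]/(x^n-1) → Z_p[x]/(x^n-1)`. -/
def phiTwo (p n : ℕ) : Rn p 2 n →+* Zn p n :=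
  Ideal.Quotient.lift _ ((Ideal.Quotient.mk _).comp (mapRingHom (epsR p))) (by
    intro f hf
    rw [Ideal.mem_span_singleton] at hf
    obtain ⟨c, rfl⟩ := hf
    have : (mapRingHom (epsR p)) (((X : Polynomial (Ru p 2)) ^ n - 1) * c)
        ∈ Ideal.span {(X : Polynomial (ZMod p)) ^ n - 1} := by
      rw [map_mul]
      refine Ideal.mul_mem_right _ _ (Ideal.subset_span ?_)
      simp
    simpa [Ideal.Quotient.eq_zero_iff_mem] using this)


namespace Aux14
variable (p : ℕ)

lemma alg_eq (s : ZMod p) :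
    algebraMap (ZMod p) (Ru p 2) s = Ideal.Quotient.mk _ (C s) := rfl

lemma epsR_alg (s : ZMod p) : epsR p (algebraMap (ZMod p) (Ru p 2) s) = s := by
  simp [epsR, alg_eq]

lemma epsR_u : epsR p (uR p 2) = 0 := by simp [epsR]

lemma u_sq : uR p 2 * uR p 2 = 0 := by
  rw [← map_mul, Ideal.Quotient.eq_zero_iff_mem]
  exact Ideal.subset_span (by simp [sq])

lemma Ru_decomp (r : Ru p 2) : ∃ s t : ZMod p,
    r = algebraMap _ _ s + uR p 2 * algebraMap _ _ t := by
  obtain ⟨f, rfl⟩ := Ideal.Quotient.mk_surjective r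
  refine ⟨f.coeff 0, f.coeff 1, ?_⟩
  rw [alg_eq, alg_eq, uR, ← map_mul, ← map_add, Ideal.Quotient.eq,
    Ideal.mem_span_singleton, X_pow_dvd_iff]
  intro d hd
  interval_cases d <;> simp

lemma u_inj (s : ZMod p) (hs : uR p 2 * algebraMap (ZMod p) (Ru p 2) s = 0) : s = 0 := by
  rw [alg_eq, uR, ← map_mul, Ideal.Quotient.eq_zero_iff_mem, Ideal.mem_span_singleton,
    X_pow_dvd_iff] at hs
  simpa using hs 1 one_lt_two

end Aux14

namespace Aux14
variable (p : ℕ)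
lemma poly_decomp (F : Polynomial (Ru p 2)) : ∃ f0 f1 : Polynomial (ZMod p),
    F = f0.map (algebraMap _ _) + C (uR p 2) * f1.map (algebraMap _ _) := by
  induction F using Polynomial.induction_on' with
  | add F G hF hG =>
      obtain ⟨a0, a1, rfl⟩ := hF
      obtain ⟨b0, b1, rfl⟩ := hG
      exact ⟨a0 + b0, a1 + b1, by rw [Polynomial.map_add, Polynomial.map_add]; ring⟩
  | monomial k r =>
      obtain ⟨s, t, rfl⟩ := Ru_decomp p r
      refine ⟨monomial k s, monomial k t, ?_⟩
      rw [map_add (monomial k), Polynomial.map_monomial, Polynomial.map_monomial,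
        C_mul_monomial]

lemma poly_u_inj (q : Polynomial (ZMod p)) (h : C (uR p 2) * q.map (algebraMap _ _) = 0) :
    q = 0 := by
  ext i
  have := congrArg (fun F => F.coeff i) h
  simp only [coeff_C_mul, coeff_map, coeff_zero] at this
  simpa using u_inj p _ this

lemma map_eps_map (q : Polynomial (ZMod p)) :
    (q.map (algebraMap (ZMod p) (Ru p 2))).map (epsR p) = q := by
  rw [Polynomial.map_map]
  have : (epsR p).comp (algebraMap (ZMod p) (Ru p 2)) = RingHom.id _ := by
    ext s; simp [epsR_alg]
  rw [this, Polynomial.map_id]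

lemma key (n : ℕ) (hp : p.Prime) (hn : 0 < n) (q : Polynomial (ZMod p))
    (h : C (uR p 2) * q.map (algebraMap (ZMod p) (Ru p 2)) ∈
      Ideal.span {(X : Polynomial (Ru p 2)) ^ n - 1}) :
    ((X : Polynomial (ZMod p)) ^ n - 1) ∣ q := by
  haveI : Fact p.Prime := ⟨hp⟩
  rw [Ideal.mem_span_singleton] at h
  obtain ⟨c, hc⟩ := h
  obtain ⟨c0, c1, rfl⟩ := poly_decomp p c
  have hXn : ((X : Polynomial (ZMod p)) ^ n - 1) ≠ 0 := by
    intro h0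
    have := congrArg (eval 0) h0
    simp [zero_pow hn.ne'] at this
  have hc0 : c0 = 0 := by
    have := congrArg (Polynomial.map (epsR p)) hc
    simp only [Polynomial.map_mul, Polynomial.map_add, map_C, epsR_u, C_0, zero_mul,
      Polynomial.map_sub, Polynomial.map_pow, map_X, Polynomial.map_one,
      map_eps_map, mul_zero, add_zero] at this
    exact (mul_eq_zero.mp this.symm).resolve_left hXn
  rw [hc0, Polynomial.map_zero, zero_add] at hc
  have hc' : C (uR p 2) * (q - ((X:Polynomial (ZMod p))^n - 1) * c1).map (algebraMap _ _) = 0 := by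
    have hmap : (((X:Polynomial (ZMod p))^n - 1) * c1).map (algebraMap (ZMod p) (Ru p 2))
        = ((X : Polynomial (Ru p 2))^n - 1) * c1.map (algebraMap _ _) := by
      simp [Polynomial.map_mul]
    rw [Polynomial.map_sub, hmap, mul_sub, hc]
    ring
  have := poly_u_inj p _ hc'
  exact ⟨c1, by linear_combination this⟩
end Aux14

section AuxMain
open Aux14
variable (p n : ℕ)

lemma uu_sq : uu p 2 n * uu p 2 n = 0 := by
  rw [uu, ← map_mul, ← C_mul, u_sq, C_0, map_zero]

lemma phiTwo_uu : phiTwo p n (uu p 2 n) = 0 := by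
  rw [uu, phiTwo, Ideal.Quotient.lift_mk]
  simp [epsR_u]

lemma liftP_Xn_sub_one : liftP p 2 n ((X : Polynomial (ZMod p)) ^ n - 1) = 0 := by
  rw [liftP, RingHom.comp_apply, Ideal.Quotient.eq_zero_iff_mem]
  refine Ideal.subset_span ?_
  simp

lemma main_step (hp : p.Prime) (hn : 0 < n) (a q : Polynomial (ZMod p))
    (ha : a ∣ (X : Polynomial (ZMod p)) ^ n - 1)
    (h : uu p 2 n * liftP p 2 n q ∈ Ideal.span {uu p 2 n * liftP p 2 n a}) :
    a ∣ q := by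
  replace h := (Ideal.mem_span_singleton (α := Rn p 2 n)).mp h
  obtain ⟨r, hr⟩ := h
  obtain ⟨F, rfl⟩ := Ideal.Quotient.mk_surjective r
  obtain ⟨f0, f1, rfl⟩ := poly_decomp p F
  have hpoly : (C (uR p 2) * a.map (algebraMap (ZMod p) (Ru p 2))) *
      (f0.map (algebraMap (ZMod p) (Ru p 2)) + C (uR p 2) * f1.map (algebraMap _ _))
      = C (uR p 2) * (a * f0).map (algebraMap (ZMod p) (Ru p 2)) := by
    have hu2 : C (uR p 2) * C (uR p 2) = 0 := by rw [← C_mul, u_sq, C_0]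
    rw [Polynomial.map_mul]
    linear_combination (a.map (algebraMap (ZMod p) (Ru p 2)) *
      f1.map (algebraMap (ZMod p) (Ru p 2))) * hu2
  have hr' : Ideal.Quotient.mk (Ideal.span {(X : Polynomial (Ru p 2)) ^ n - 1})
      (C (uR p 2) * q.map (algebraMap (ZMod p) (Ru p 2)))
      = Ideal.Quotient.mk _ (C (uR p 2) * (a * f0).map (algebraMap (ZMod p) (Ru p 2))) := by
    calc _ = uu p 2 n * liftP p 2 n q := by
            rw [uu, liftP]; rw [RingHom.comp_apply, ← map_mul]; rfl
      _ = uu p 2 n * liftP p 2 n a * Ideal.Quotient.mk _ _ := hr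
      _ = _ := by
            rw [uu, liftP, RingHom.comp_apply, ← map_mul, ← map_mul]
            exact congrArg _ hpoly
  rw [Ideal.Quotient.eq] at hr'
  have hdvd : ((X : Polynomial (ZMod p)) ^ n - 1) ∣ (q - a * f0) := by
    refine key p n hp hn _ ?_
    have : C (uR p 2) * q.map (algebraMap (ZMod p) (Ru p 2)) -
        C (uR p 2) * (a * f0).map (algebraMap (ZMod p) (Ru p 2)) =
        C (uR p 2) * (q - a * f0).map (algebraMap (ZMod p) (Ru p 2)) := by
      rw [Polynomial.map_sub]; ring
    rwa [this] at hr'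
  obtain ⟨t, ht⟩ := ha.trans hdvd
  exact ⟨f0 + t, by linear_combination ht⟩

end AuxMain

/-- Let `C = <g(x) + u p(x), u a(x)>` over `R_2 = Z_p[u]/(u^2)` come from the
standard construction: the image of `C` under reduction mod `u` is `<g(x)>` with
`g ∣ x^n - 1` (witnessed by `h` with `g h = x^n - 1`), the kernel of `φ|_C` is `<u a(x)>`
with `a ∣ x^n - 1`, and `g(x) + u p(x) ∈ C` lifts `g`.  Then `a ∣ g` and
`a ∣ p(x) (x^n - 1)/g(x)` in `Z_p[x]`. -/
theorem stmt14 (p n : ℕ) (hp : p.Prime) (hn : 0 < n)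
    (g pp a h : Polynomial (ZMod p)) (Ck : Ideal (Rn p 2 n))
    (hgh : g * h = (X : Polynomial (ZMod p)) ^ n - 1)
    (ha : a ∣ (X : Polynomial (ZMod p)) ^ n - 1)
    (himg : Ideal.map (phiTwo p n) Ck = Ideal.span {mkZ p n g})
    (hker : {c : Rn p 2 n | c ∈ Ck ∧ phiTwo p n c = 0} =
      ↑(Ideal.span {uu p 2 n * liftP p 2 n a} : Ideal (Rn p 2 n)))
    (hmem : liftP p 2 n g + uu p 2 n * liftP p 2 n pp ∈ Ck)
    (hC : Ck = Ideal.span {liftP p 2 n g + uu p 2 n * liftP p 2 n pp,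
      uu p 2 n * liftP p 2 n a}) :
    a ∣ g ∧ a ∣ pp * h := by
  have hker' : ∀ q : Polynomial (ZMod p), uu p 2 n * liftP p 2 n q ∈ Ck →
      uu p 2 n * liftP p 2 n q ∈ Ideal.span {uu p 2 n * liftP p 2 n a} := by
    intro q hq
    have hphi : phiTwo p n (uu p 2 n * liftP p 2 n q) = 0 := by
      rw [map_mul, phiTwo_uu, zero_mul]
    have : uu p 2 n * liftP p 2 n q ∈ {c : Rn p 2 n | c ∈ Ck ∧ phiTwo p n c = 0} :=
      ⟨hq, hphi⟩
    rw [hker] at this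
    exact this
  constructor
  · refine main_step p n hp hn a g ha (hker' g ?_)
    have h1 : uu p 2 n * (liftP p 2 n g + uu p 2 n * liftP p 2 n pp) ∈ Ck :=
      Ideal.mul_mem_left _ _ hmem
    have : uu p 2 n * (liftP p 2 n g + uu p 2 n * liftP p 2 n pp)
        = uu p 2 n * liftP p 2 n g := by
      rw [mul_add, ← mul_assoc, uu_sq]; simp; exact zero_mul (M₀ := Rn p 2 n) _
    rwa [this] at h1
  · refine main_step p n hp hn a (pp * h) ha (hker' (pp * h) ?_)
    have h1 : liftP p 2 n h * (liftP p 2 n g + uu p 2 n * liftP p 2 n pp) ∈ Ck :=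
      Ideal.mul_mem_left _ _ hmem
    have : liftP p 2 n h * (liftP p 2 n g + uu p 2 n * liftP p 2 n pp)
        = uu p 2 n * liftP p 2 n (pp * h) := by
      rw [mul_add, ← map_mul, mul_comm h g, hgh, liftP_Xn_sub_one, map_mul]
      ring
    rwa [this] at h1
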